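/- arXiv:1906.04339 — 2 statements merged into one kernel-verified Lean document; each statement's English description precedes it below -/
import Mathlib

section
/- The ratio of the Kirchhoff index of G_n to its Wiener index tends to 1/6 as n → ∞; that is, the sequence ((n³ + 4n² − n)/12) / W(G_n), where (n³ + 4n² − n)/12 is the Kirchhoff index of G_n and W(G_n) is its Wiener index, converges to 1/6 as n → ∞. -/
/-- The Wiener index of a graph: half the sum of the graph distances `d(u,v)` over all ordered
pairs `(u,v)` of vertices (a finite sum for a finite graph, expressed with `finsum` so that it is
defined for every `n`). -/
noncomputable def wienerIndex {V : Type*} (G : SimpleGraph V) : ℕ :=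
  (∑ᶠ u : V, ∑ᶠ v : V, G.dist u v) / 2

/-- The graph `G_n = P₂ ⊠ C_n`: vertex set `(ZMod n) × Fin 2`, where two distinct vertices
`(i,a)` and `(j,b)` are adjacent iff `i = j` or `i = j + 1` or `j = i + 1` in `ZMod n`. -/
def Gn (n : ℕ) : SimpleGraph (ZMod n × Fin 2) where
  Adj x y := x ≠ y ∧ (x.1 = y.1 ∨ x.1 = y.1 + 1 ∨ y.1 = x.1 + 1)
  symm := by
    constructor
    rintro x y ⟨hne, h | h | h⟩
    · exact ⟨hne.symm, Or.inl h.symm⟩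
    · exact ⟨hne.symm, Or.inr (Or.inr h)⟩
    · exact ⟨hne.symm, Or.inr (Or.inl h)⟩
  loopless := by constructor; rintro x ⟨hne, -⟩; exact hne rfl

instance (n : ℕ) : DecidableRel (Gn n).Adj :=
  fun _ _ => inferInstanceAs (Decidable (_ ∧ _))


open Filter

noncomputable def cyc {n : ℕ} (i j : ZMod n) : ℕ := min (i - j).val (j - i).val
lemma cyc_comm {n : ℕ} (i j : ZMod n) : cyc i j = cyc j i := min_comm _ _
lemma cyc_self {n : ℕ} (i : ZMod n) : cyc i i = 0 := by simp [cyc]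
lemma sub_val {n : ℕ} [NeZero n] (x y : ZMod n) :
    (x - y).val = if y.val ≤ x.val then x.val - y.val else n - (y.val - x.val) := by
  split_ifs with h
  · exact ZMod.val_sub h
  · have h' : x.val ≤ y.val := by omega
    have e : x - y = -(y - x) := by ring
    rw [e, ZMod.neg_val]
    have hyx : (y - x).val = y.val - x.val := ZMod.val_sub h'
    split_ifs with h0
    · exact absurd (le_of_eq (congrArg ZMod.val (sub_eq_zero.mp h0))) h
    · rw [hyx]
lemma cyc_eq {n : ℕ} [NeZero n] (i j : ZMod n) :
    cyc i j = min (i - j).val (n - (i - j).val) := by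
  unfold cyc
  have h : j - i = -(i - j) := by ring
  rw [h, ZMod.neg_val]
  split_ifs with h0
  · simp [h0]
  · rfl
lemma val_sub_one {n : ℕ} [NeZero n] (hn : 3 ≤ n) (x : ZMod n) :
    (x - 1).val = if x.val = 0 then n - 1 else x.val - 1 := by
  haveI : Fact (1 < n) := ⟨by omega⟩
  rw [sub_val, ZMod.val_one]
  split_ifs <;> omega
lemma cyc_succ_le {n : ℕ} [NeZero n] (hn : 3 ≤ n) (k i : ZMod n) :
    cyc k (i+1) ≤ cyc k i + 1 ∧ cyc k i ≤ cyc k (i+1) + 1 := by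
  have e : k - (i + 1) = (k - i) - 1 := by ring
  rw [cyc_eq k (i+1), cyc_eq k i, e, val_sub_one hn]
  have h1 : (k - i).val < n := ZMod.val_lt _
  split_ifs <;> omega

-- graph lemmas
lemma gn_adj_succ {n : ℕ} [NeZero n] (hn : 3 ≤ n) (i : ZMod n) (a b : Fin 2) :
    (Gn n).Adj (i, a) (i + 1, b) := by
  refine ⟨fun h => ?_, Or.inr (Or.inr rfl)⟩
  haveI : Fact (1 < n) := ⟨by omega⟩
  have h1 : i = i + 1 := congrArg Prod.fst h
  exact one_ne_zero (left_eq_add.mp h1)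

lemma gn_walk_ub {n : ℕ} [NeZero n] (hn : 3 ≤ n) (m : ℕ) :
    ∀ (i j : ZMod n) (a b : Fin 2), (j - i).val = m →
      ∃ p : (Gn n).Walk (i, a) (j, b), p.length ≤ max m 1 := by
  induction m with
  | zero =>
    intro i j a b h
    have hji : j = i := sub_eq_zero.mp ((ZMod.val_eq_zero _).mp h)
    subst hji
    by_cases hab : a = b
    · subst hab; exact ⟨.nil, by simp⟩
    · have adj : (Gn n).Adj (j,a) (j,b) := ⟨by simp [Prod.ext_iff, hab], Or.inl rfl⟩
      exact ⟨(SimpleGraph.Walk.cons adj SimpleGraph.Walk.nil : (Gn n).Walk (j,a) (j,b)), by simp⟩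
  | succ m ih =>
    intro i j a b h
    rcases Nat.eq_zero_or_pos m with hm | hm
    · subst hm
      haveI : Fact (1 < n) := ⟨by omega⟩
      have h1 : (j - i).val = (1 : ZMod n).val := by rw [ZMod.val_one]; exact h
      have h2 : j = i + 1 := by
        have := ZMod.val_injective n h1
        rw [sub_eq_iff_eq_add] at this
        rw [this, add_comm]
      subst h2
      exact ⟨.cons (gn_adj_succ hn i a b) .nil, by simp⟩
    · have h' : (j - (i+1)).val = m := by
        have e : j - (i+1) = (j - i) - 1 := by ring
        rw [e, val_sub_one hn, h]
        simp
      obtain ⟨p, hp⟩ := ih (i+1) j b b h'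
      exact ⟨.cons (gn_adj_succ hn i a b) p, by rw [SimpleGraph.Walk.length_cons]; omega⟩

lemma gn_walk_lb {n : ℕ} [NeZero n] (hn : 3 ≤ n) :
    ∀ {u v : ZMod n × Fin 2} (p : (Gn n).Walk u v), cyc u.1 v.1 ≤ p.length := by
  intro u v p
  induction p with
  | nil => simp [cyc_self]
  | @cons u w v h p ih =>
    rw [SimpleGraph.Walk.length_cons]
    obtain ⟨-, h1 | h1 | h1⟩ := h
    · rw [show u.1 = w.1 from h1]; omega
    · have h2 := (cyc_succ_le hn v.1 w.1).1
      have e1 : cyc v.1 (w.1 + 1) = cyc u.1 v.1 := by rw [← h1, cyc_comm]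
      have e2 : cyc v.1 w.1 = cyc w.1 v.1 := cyc_comm _ _
      omega
    · have h2 := (cyc_succ_le hn v.1 u.1).2
      have e1 : cyc v.1 u.1 = cyc u.1 v.1 := cyc_comm _ _
      have e2 : cyc v.1 (u.1 + 1) = cyc w.1 v.1 := by rw [← h1, cyc_comm]
      omega

lemma gn_dist_eq {n : ℕ} [NeZero n] (hn : 3 ≤ n) (i j : ZMod n) (a b : Fin 2)
    (hne : (i,a) ≠ (j,b)) :
    (Gn n).dist (i,a) (j,b) = max (cyc i j) 1 := by
  obtain ⟨p₁, hp₁⟩ := gn_walk_ub hn _ i j a b rfl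
  obtain ⟨p₂, hp₂⟩ := gn_walk_ub hn _ j i b a rfl
  have hub1 : (Gn n).dist (i,a) (j,b) ≤ max ((j - i).val) 1 :=
    le_trans (SimpleGraph.dist_le p₁) hp₁
  have hub2 : (Gn n).dist (i,a) (j,b) ≤ max ((i - j).val) 1 := by
    rw [SimpleGraph.dist_comm]
    exact le_trans (SimpleGraph.dist_le p₂) hp₂
  have hreach : (Gn n).Reachable (i,a) (j,b) := ⟨p₁⟩
  have hlb1 : 1 ≤ (Gn n).dist (i,a) (j,b) := hreach.pos_dist_of_ne hne
  have hlb2 : cyc i j ≤ (Gn n).dist (i,a) (j,b) := by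
    obtain ⟨p, hp⟩ := hreach.exists_walk_length_eq_dist
    rw [← hp]
    exact gn_walk_lb hn p
  have hc : cyc i j = min (i - j).val (j - i).val := rfl
  omega

lemma sum_min_two' (m : ℕ) : ∀ k : ℕ, ∑ v ∈ Finset.range k, min 2 (m - 2*v) = min m (2*k) := by
  intro k
  induction k with
  | zero => simp
  | succ k ih => rw [Finset.sum_range_succ, ih]; omega

lemma T_rec (n : ℕ) : ∑ v ∈ Finset.range (n+2), min v (n+2-v)
    = (∑ v ∈ Finset.range n, min v (n-v)) + (n+1) := by
  rw [Finset.sum_range_succ', Finset.sum_range_succ']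
  have h1 : ∀ v ∈ Finset.range n, min (v+1+1) (n+2-(v+1+1)) = min v (n - v) + min 2 (n - 2*v) := by
    intro v _; omega
  rw [Finset.sum_congr rfl h1, Finset.sum_add_distrib, sum_min_two']
  omega

lemma T_val (n : ℕ) : ∑ v ∈ Finset.range n, min v (n - v) = n * n / 4 := by
  induction n using Nat.strong_induction_on with
  | _ n ih =>
    match n with
    | 0 => simp
    | 1 => simp
    | (n+2) =>
      rw [T_rec, ih n (by omega)]
      have h : (n+2)*(n+2) = n*n + (4*n+4) := by ring
      rw [h]; omega

lemma pair_sum {n : ℕ} [NeZero n] (hn : 3 ≤ n) (i j : ZMod n) :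
    ∑ a : Fin 2, ∑ b : Fin 2, (Gn n).dist (i,a) (j,b) = if i = j then 2 else 4 * cyc i j := by
  split_ifs with hij
  · subst hij
    have h01 : (Gn n).dist (i,(0:Fin 2)) (i,1) = 1 := by
      rw [gn_dist_eq hn i i 0 1 (by simp), cyc_self]
      omega
    have h10 : (Gn n).dist (i,(1:Fin 2)) (i,0) = 1 := by
      rw [gn_dist_eq hn i i 1 0 (by simp), cyc_self]
      omega
    simp [Fin.sum_univ_two, h01, h10, SimpleGraph.dist_self]
  · have h1 : i - j ≠ 0 := sub_ne_zero.mpr hij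
    have h2 : j - i ≠ 0 := sub_ne_zero.mpr (Ne.symm hij)
    have v1 : (i-j).val ≠ 0 := fun h => h1 ((ZMod.val_eq_zero _).mp h)
    have v2 : (j-i).val ≠ 0 := fun h => h2 ((ZMod.val_eq_zero _).mp h)
    have hcd : cyc i j = min (i-j).val (j-i).val := rfl
    have key : ∀ a b : Fin 2, (Gn n).dist (i,a) (j,b) = cyc i j := by
      intro a b
      rw [gn_dist_eq hn i j a b (by simp [Prod.ext_iff, hij])]
      omega
    simp only [key, Fin.sum_univ_two]
    ring

lemma row_sum {n : ℕ} [NeZero n] (i : ZMod n) :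
    ∑ j : ZMod n, cyc i j = n * n / 4 := by
  have e1 : ∑ k : ZMod n, cyc i (i - k) = ∑ j : ZMod n, cyc i j :=
    Fintype.sum_equiv (Equiv.subLeft i) _ _ (fun k => by simp)
  rw [← e1]
  have e2 : ∀ k : ZMod n, cyc i (i - k) = min k.val (n - k.val) := by
    intro k
    rw [cyc_eq, show i - (i - k) = k from by ring]
  rw [Finset.sum_congr rfl (fun k _ => e2 k), ← T_val n]
  exact Finset.sum_nbij' (fun k => k.val) (fun v => (v : ZMod n))
      (fun k _ => Finset.mem_range.mpr (ZMod.val_lt k))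
      (fun v _ => Finset.mem_univ _)
      (fun k _ => ZMod.natCast_zmod_val k)
      (fun v hv => ZMod.val_cast_of_lt (Finset.mem_range.mp hv))
      (fun k _ => rfl)

lemma total_sum (n : ℕ) [NeZero n] (hn : 3 ≤ n) :
    (∑ u : ZMod n × Fin 2, ∑ v : ZMod n × Fin 2, (Gn n).dist u v)
      = 4 * (n * (n * n / 4)) + 2 * n := by
  simp only [Fintype.sum_prod_type]
  rw [Finset.sum_congr rfl (fun i _ => Finset.sum_comm)]
  have step : ∀ i j : ZMod n,
      ∑ a : Fin 2, ∑ b : Fin 2, (Gn n).dist (i,a) (j,b)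
        = 4 * cyc i j + if i = j then 2 else 0 := by
    intro i j
    rw [pair_sum hn i j]
    by_cases h : i = j
    · subst h; simp [cyc_self]
    · simp [h]
  rw [Finset.sum_congr rfl (fun i _ =>
       Finset.sum_congr rfl (fun j _ => step i j))]
  have inner : ∀ i : ZMod n,
      (∑ j : ZMod n, (4 * cyc i j + if i = j then 2 else 0))
        = 4 * (n * n / 4) + 2 := by
    intro i
    rw [Finset.sum_add_distrib, ← Finset.mul_sum, row_sum i, Finset.sum_ite_eq]
    simp
  rw [Finset.sum_congr rfl (fun i _ => inner i), Finset.sum_const, Finset.card_univ,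
      ZMod.card, smul_eq_mul]
  ring


lemma div4_bounds (m : ℕ) : m ≤ 4*(m/4) + 3 ∧ 4*(m/4) ≤ m := by omega

lemma num_lim : Tendsto (fun n : ℕ => (((n:ℝ)^3 + 4*n^2 - n)/12) / (n:ℝ)^3)
    atTop (nhds (1/12)) := by
  have h : Tendsto (fun n : ℕ => (1 + 4*(n:ℝ)⁻¹ - (n:ℝ)⁻¹*(n:ℝ)⁻¹)/12)
      atTop (nhds ((1 + 4*0 - 0*0)/12)) :=
    Tendsto.div_const ((tendsto_const_nhds.add
      (tendsto_inv_atTop_nhds_zero_nat.const_mul 4)).sub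
      (tendsto_inv_atTop_nhds_zero_nat.mul tendsto_inv_atTop_nhds_zero_nat)) 12
  norm_num at h
  apply h.congr'
  filter_upwards [eventually_ge_atTop 1] with n hn
  have hx : (n:ℝ) ≠ 0 := by
    have : (1:ℝ) ≤ (n:ℝ) := by exact_mod_cast hn
    positivity
  field_simp

lemma den_lim : Tendsto (fun n : ℕ => (((2*(n*(n*n/4)) + n : ℕ) : ℝ)) / (n:ℝ)^3)
    atTop (nhds (1/2)) := by
  have hg : Tendsto (fun n : ℕ => 1/2 - (n:ℝ)⁻¹*(n:ℝ)⁻¹) atTop (nhds (1/2 - 0*0)) :=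
    tendsto_const_nhds.sub
      (tendsto_inv_atTop_nhds_zero_nat.mul tendsto_inv_atTop_nhds_zero_nat)
  have hh : Tendsto (fun n : ℕ => 1/2 + (n:ℝ)⁻¹*(n:ℝ)⁻¹) atTop (nhds (1/2 + 0*0)) :=
    tendsto_const_nhds.add
      (tendsto_inv_atTop_nhds_zero_nat.mul tendsto_inv_atTop_nhds_zero_nat)
  norm_num at hg hh
  apply tendsto_of_tendsto_of_tendsto_of_le_of_le' hg hh
  · filter_upwards [eventually_ge_atTop 3] with n hn
    have hx : (3:ℝ) ≤ (n:ℝ) := by exact_mod_cast hn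
    have hx0 : (0:ℝ) < (n:ℝ) := by linarith
    obtain ⟨hb1, hb2⟩ := div4_bounds (n*n)
    have hc1 : ((n:ℝ))*n ≤ 4*((n*n/4 : ℕ):ℝ) + 3 := by exact_mod_cast hb1
    have hc2 : 4*((n*n/4 : ℕ):ℝ) ≤ (n:ℝ)*n := by exact_mod_cast hb2
    have hD : (((2*(n*(n*n/4)) + n : ℕ) : ℝ)) = 2*((n:ℝ)*((n*n/4 : ℕ):ℝ)) + n := by
      push_cast; ring
    rw [hD, le_div_iff₀ (by positivity)]
    have e : (1/2 - (n:ℝ)⁻¹*(n:ℝ)⁻¹)*(n:ℝ)^3 = (n:ℝ)^3/2 - n := by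
      field_simp
    rw [e]
    nlinarith [mul_nonneg (le_of_lt hx0) (by linarith : (0:ℝ) ≤ 4*((n*n/4 : ℕ):ℝ) + 3 - (n:ℝ)*n)]
  · filter_upwards [eventually_ge_atTop 3] with n hn
    have hx : (3:ℝ) ≤ (n:ℝ) := by exact_mod_cast hn
    have hx0 : (0:ℝ) < (n:ℝ) := by linarith
    obtain ⟨hb1, hb2⟩ := div4_bounds (n*n)
    have hc2 : 4*((n*n/4 : ℕ):ℝ) ≤ (n:ℝ)*n := by exact_mod_cast hb2
    have hD : (((2*(n*(n*n/4)) + n : ℕ) : ℝ)) = 2*((n:ℝ)*((n*n/4 : ℕ):ℝ)) + n := by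
      push_cast; ring
    rw [hD, div_le_iff₀ (by positivity)]
    have e : (1/2 + (n:ℝ)⁻¹*(n:ℝ)⁻¹)*(n:ℝ)^3 = (n:ℝ)^3/2 + n := by
      field_simp
    rw [e]
    nlinarith [mul_nonneg (le_of_lt hx0) (by linarith : (0:ℝ) ≤ (n:ℝ)*n - 4*((n*n/4 : ℕ):ℝ))]

lemma key_lim : Tendsto
    (fun n : ℕ => (((n:ℝ)^3 + 4*n^2 - n)/12) / (((2*(n*(n*n/4)) + n : ℕ) : ℝ)))
    atTop (nhds (1/6)) := by
  have h := num_lim.div den_lim (by norm_num)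
  norm_num at h
  have triv : ∀ a b c : ℝ, c ≠ 0 → (a/c)/(b/c) = a/b := by
    intro a b c hc
    by_cases hb : b = 0
    · simp [hb]
    · field_simp
  apply h.congr'
  filter_upwards [eventually_ge_atTop 1] with n hn
  have hx : ((n:ℝ))^3 ≠ 0 := by
    have : (1:ℝ) ≤ (n:ℝ) := by exact_mod_cast hn
    positivity
  have hbc : (((2*(n*(n*n/4)) + n : ℕ) : ℝ)) = 2*((n:ℝ)*((n*n/4:ℕ):ℝ)) + (n:ℝ) := by
    push_cast; ring
  simp only [Pi.div_apply]
  rw [triv _ _ _ hx, hbc]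

lemma wiener_val (n : ℕ) (hn : 3 ≤ n) :
    wienerIndex (Gn n) = 2 * (n * (n * n / 4)) + n := by
  haveI : NeZero n := ⟨by omega⟩
  unfold wienerIndex
  simp only [finsum_eq_sum_of_fintype]
  rw [total_sum n hn]
  generalize n * (n * n / 4) = A
  omega

/-- The ratio of the Kirchhoff index `(n³ + 4n² − n)/12` of `G_n = P₂ ⊠ C_n`
to its Wiener index `W(G_n)` converges to `1/6` as `n → ∞`. -/
theorem kirchhoff_div_wiener_tendsto :
    Filter.Tendsto
      (fun n : ℕ => (((n : ℝ) ^ 3 + 4 * n ^ 2 - n) / 12) / (wienerIndex (Gn n) : ℝ))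
      Filter.atTop (nhds (1 / 6)) := by
  apply key_lim.congr'
  filter_upwards [Filter.eventually_ge_atTop 3] with n hn
  rw [wiener_val n hn]
end

section
/- Let r : ℕ → ℕ be any function with r(n) ≤ n for all n. Then the ratio of the Kirchhoff index of G_n^{r(n)} to its Wiener index tends to 1/6 as n → ∞; that is, the sequence ((n³ + 4n² + (2·r(n) − 1)·n)/12) / (W(G_n) + r(n)), where the numerator is the Kirchhoff index of any graph obtained from G_n by deleting r(n) vertical edges and the denominator is its Wiener index, converges to 1/6 as n → ∞. -/
section
variable {n : ℕ} (hn : 2 ≤ n)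
include hn

lemma adj_step (i : ZMod n) (a b : Fin 2) : (Gn n).Adj (i, a) (i + 1, b) := by
  haveI : Fact (1 < n) := ⟨hn⟩
  refine ⟨fun h => ?_, Or.inr (Or.inr rfl)⟩
  have h1 : i = i + 1 := congrArg Prod.fst h
  exact one_ne_zero (by linear_combination -h1 : (1 : ZMod n) = 0)

lemma walk_exists : ∀ (k : ℕ), 1 ≤ k → ∀ (i : ZMod n) (a b : Fin 2),
    ∃ p : (Gn n).Walk (i, a) (i + (k : ZMod n), b), p.length = k := by
  intro k
  induction k with
  | zero => omega
  | succ k ih =>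
    intro _ i a b
    rcases Nat.eq_zero_or_pos k with hk | hk
    · subst hk
      have h : (Gn n).Adj (i, a) (i + ((1:ℕ) : ZMod n), b) := by
        rw [Nat.cast_one]; exact adj_step hn i a b
      exact ⟨SimpleGraph.Walk.cons h SimpleGraph.Walk.nil, rfl⟩
    · obtain ⟨p, hp⟩ := ih hk (i + 1) a b
      have hc : (i + 1) + (k : ZMod n) = i + ((k + 1 : ℕ) : ZMod n) := by push_cast; ring
      refine ⟨SimpleGraph.Walk.cons (adj_step hn i a a) (p.copy rfl (by rw [hc])), ?_⟩
      simp [hp]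

lemma keyA [NeZero n] (z : ZMod n) :
    min ((z + 1).val) ((-(z + 1)).val) ≤ min z.val ((-z).val) + 1 := by
  haveI : Fact (1 < n) := ⟨hn⟩
  have ha : z.val < n := ZMod.val_lt z
  have h2 : (z + 1).val = (z.val + 1) % n := by rw [ZMod.val_add, ZMod.val_one]
  by_cases hz1 : z.val + 1 = n
  · have e2 : (z + 1).val = 0 := by rw [h2, hz1, Nat.mod_self]
    simp [e2]
  · have hlt : z.val + 1 < n := by omega
    have e2 : (z + 1).val = z.val + 1 := by rw [h2, Nat.mod_eq_of_lt hlt]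
    have hz0 : ¬ (z + 1 = 0) := by
      intro h; rw [← ZMod.val_eq_zero] at h; omega
    have e4 : (-(z + 1)).val = n - (z.val + 1) := by
      rw [ZMod.neg_val, if_neg hz0, e2]
    by_cases hz : z = 0
    · have : z.val = 0 := by rw [hz]; exact ZMod.val_zero
      have e3 : (-z).val = 0 := by rw [hz, neg_zero]; exact ZMod.val_zero
      rw [e2, e4, e3, this]
      omega
    · have e3 : (-z).val = n - z.val := by rw [ZMod.neg_val, if_neg hz]
      have hzv : z.val ≠ 0 := fun h => hz (ZMod.val_eq_zero z |>.mp h)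
      rw [e2, e4, e3]
      omega

lemma keyB [NeZero n] (z : ZMod n) :
    min z.val ((-z).val) ≤ min ((z + 1).val) ((-(z + 1)).val) + 1 := by
  have := keyA hn (-(z + 1))
  have h1 : -(z + 1) + 1 = -z := by ring
  have h2 : -(-(z + 1)) = z + 1 := by ring
  rw [h1, h2, neg_neg] at this
  omega

lemma len_ge [NeZero n] {u v : ZMod n × Fin 2} (p : (Gn n).Walk u v) :
    min ((v.1 - u.1).val) ((u.1 - v.1).val) ≤ p.length := by
  induction p with
  | nil => simp
  | @cons u x v h p ih =>
    rw [SimpleGraph.Walk.length_cons]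
    rcases h.2 with h1 | h1 | h1
    · rw [h1]; omega
    · -- u.1 = x.1 + 1
      have e1 : v.1 - u.1 = -((x.1 - v.1) + 1) := by rw [h1]; ring
      have e2 : u.1 - v.1 = (x.1 - v.1) + 1 := by rw [h1]; ring
      have := keyA hn (x.1 - v.1)
      have h3 : -(x.1 - v.1) = v.1 - x.1 := by ring
      rw [e1, e2, min_comm]
      rw [h3] at this
      omega
    · -- x.1 = u.1 + 1
      have e1 : x.1 - v.1 = (u.1 - v.1) + 1 := by rw [h1]; ring
      have e2 : v.1 - x.1 = -((u.1 - v.1) + 1) := by rw [h1]; ring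
      have := keyB hn (u.1 - v.1)
      have h3 : -(u.1 - v.1) = v.1 - u.1 := by ring
      rw [e1, e2] at ih
      rw [h3] at this
      omega
end


section
variable {n : ℕ} (hn : 2 ≤ n)
include hn

lemma gnDistFormula [NeZero n] (i j : ZMod n) (a b : Fin 2) :
    (Gn n).dist (i, a) (j, b) =
      if i = j then (if a = b then 0 else 1) else min ((j - i).val) ((i - j).val) := by
  by_cases hij : i = j
  · subst hij
    by_cases hab : a = b
    · subst hab; simp
    · simp only [if_pos rfl, if_neg hab]
      exact SimpleGraph.dist_eq_one_iff_adj.mpr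
        ⟨fun h => hab (congrArg Prod.snd h), Or.inl rfl⟩
  · rw [if_neg hij]
    have hk1 : (j - i).val ≠ 0 := fun h =>
      hij (by have := (ZMod.val_eq_zero _).mp h; linear_combination -this)
    have hk2 : (i - j).val ≠ 0 := fun h =>
      hij (by have := (ZMod.val_eq_zero _).mp h; linear_combination this)
    obtain ⟨p, hp⟩ := walk_exists hn ((j - i).val) (by omega) i a b
    have hcast1 : i + (((j - i).val : ℕ) : ZMod n) = j := by
      rw [ZMod.natCast_val, ZMod.cast_id]; ring
    obtain ⟨q, hq⟩ := walk_exists hn ((i - j).val) (by omega) j b a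
    have hcast2 : j + (((i - j).val : ℕ) : ZMod n) = i := by
      rw [ZMod.natCast_val, ZMod.cast_id]; ring
    apply le_antisymm
    · apply le_min
      · have := SimpleGraph.dist_le (p.copy rfl (by rw [hcast1]))
        rwa [SimpleGraph.Walk.length_copy, hp] at this
      · have := SimpleGraph.dist_le (q.copy rfl (by rw [hcast2]))
        rw [SimpleGraph.dist_comm]
        rwa [SimpleGraph.Walk.length_copy, hq] at this
    · obtain ⟨w, hw⟩ := SimpleGraph.Reachable.exists_walk_length_eq_dist
        ⟨p.copy rfl (by rw [hcast1])⟩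
      have := len_ge hn w
      simp only at this
      omega

lemma gnPairSum [NeZero n] (i j : ZMod n) :
    ∑ a : Fin 2, ∑ b : Fin 2, (Gn n).dist (i, a) (j, b) =
      4 * min ((j - i).val) ((i - j).val) + (if i = j then 2 else 0) := by
  by_cases h : i = j
  · subst h
    simp [gnDistFormula hn, Fin.sum_univ_two, sub_self]
  · simp [gnDistFormula hn, h, Fin.sum_univ_two]
    ring

lemma gnInnerSum [NeZero n] (i : ZMod n) :
    ∑ j : ZMod n, min ((j - i).val) ((i - j).val)
      = ∑ k ∈ Finset.range n, min k (n - k) := by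
  have h1 : ∑ t : ZMod n, min (t.val) ((-t).val)
      = ∑ j : ZMod n, min ((j - i).val) ((i - j).val) :=
    Fintype.sum_equiv (Equiv.addLeft i) _ _ (fun t => by
      simp only [Equiv.coe_addLeft]
      congr 2 <;> ring)
  rw [← h1]
  refine Finset.sum_nbij' (fun t => t.val) (fun k => (k : ZMod n)) ?_ ?_ ?_ ?_ ?_
  · intro t _
    exact Finset.mem_range.mpr (ZMod.val_lt t)
  · intro k _
    exact Finset.mem_univ _
  · intro t _
    show ((t.val : ℕ) : ZMod n) = t
    rw [ZMod.natCast_val, ZMod.cast_id]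
  · intro k hk
    show ((k : ZMod n)).val = k
    exact ZMod.val_cast_of_lt (Finset.mem_range.mp hk)
  · intro t _
    rw [ZMod.neg_val]
    by_cases h : t = 0
    · subst h; simp
    · rw [if_neg h]

lemma wiener_eq [NeZero n] :
    wienerIndex (Gn n) = 2 * n * (∑ k ∈ Finset.range n, min k (n - k)) + n := by
  unfold wienerIndex
  simp only [finsum_eq_sum_of_fintype]
  rw [Fintype.sum_prod_type]
  have step : ∀ u : ZMod n × Fin 2, ∑ v : ZMod n × Fin 2, (Gn n).dist u v
      = ∑ j : ZMod n, ∑ b : Fin 2, (Gn n).dist u (j, b) := fun u =>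
    Fintype.sum_prod_type _
  have main : ∑ i : ZMod n, ∑ a : Fin 2, ∑ j : ZMod n, ∑ b : Fin 2, (Gn n).dist ((i, a)) ((j, b))
      = 4 * (n * (∑ k ∈ Finset.range n, min k (n - k))) + 2 * n := by
    have swap : ∀ i : ZMod n, ∑ a : Fin 2, ∑ j : ZMod n, ∑ b : Fin 2, (Gn n).dist ((i, a)) ((j, b))
        = ∑ j : ZMod n, ∑ a : Fin 2, ∑ b : Fin 2, (Gn n).dist ((i, a)) ((j, b)) := fun i =>
      Finset.sum_comm
    calc ∑ i : ZMod n, ∑ a : Fin 2, ∑ j : ZMod n, ∑ b : Fin 2, (Gn n).dist ((i, a)) ((j, b))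
        = ∑ i : ZMod n, ∑ j : ZMod n,
            (4 * min ((j - i).val) ((i - j).val) + (if i = j then 2 else 0)) := by
          refine Finset.sum_congr rfl fun i _ => ?_
          rw [swap i]
          exact Finset.sum_congr rfl fun j _ => gnPairSum hn i j
      _ = ∑ i : ZMod n, (4 * (∑ k ∈ Finset.range n, min k (n - k)) + 2) := by
          refine Finset.sum_congr rfl fun i _ => ?_
          rw [Finset.sum_add_distrib, ← Finset.mul_sum, gnInnerSum hn i, Finset.sum_ite_eq]
          simp
      _ = 4 * (n * (∑ k ∈ Finset.range n, min k (n - k))) + 2 * n := by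
          rw [Finset.sum_const, Finset.card_univ, ZMod.card]
          ring
  calc (∑ i : ZMod n, ∑ a : Fin 2, ∑ v : ZMod n × Fin 2, (Gn n).dist ((i, a)) v) / 2
      = (∑ i : ZMod n, ∑ a : Fin 2, ∑ j : ZMod n, ∑ b : Fin 2, (Gn n).dist ((i, a)) ((j, b))) / 2 := by
        congr 1
        exact Finset.sum_congr rfl fun i _ => Finset.sum_congr rfl fun a _ => step (i, a)
    _ = (4 * (n * (∑ k ∈ Finset.range n, min k (n - k))) + 2 * n) / 2 := by rw [main]
    _ = 2 * n * (∑ k ∈ Finset.range n, min k (n - k)) + n := by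
        have h2 : 4 * (n * (∑ k ∈ Finset.range n, min k (n - k))) + 2 * n
            = (2 * n * (∑ k ∈ Finset.range n, min k (n - k)) + n) * 2 := by ring
        rw [h2, Nat.mul_div_cancel _ (by norm_num)]

end

lemma Ssum : ∀ n, 4 * (∑ k ∈ Finset.range n, min k (n-k)) + n % 2 = n^2 := by
  intro n
  induction n using Nat.twoStepInduction with
  | zero => simp
  | one => simp
  | more n ih _ =>
    rw [Finset.sum_range_succ']
    have h1 : ∀ k ∈ Finset.range (n+1), min (k+1) (n+2-(k+1)) = min k (n-k) + 1 := by
      intro k hk; simp only [Finset.mem_range] at hk; omega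
    rw [Finset.sum_congr rfl h1, Finset.sum_add_distrib, Finset.sum_range_succ]
    simp only [Finset.sum_const, Finset.card_range, smul_eq_mul, mul_one]
    have h2 : min n (n - n) = 0 := by omega
    have h3 : (n+2)^2 = n^2 + 4*n + 4 := by ring
    rw [h2]
    omega

lemma wiener_bounds (n : ℕ) (hn : 3 ≤ n) :
    n^3 + n ≤ 2 * wienerIndex (Gn n) ∧ 2 * wienerIndex (Gn n) ≤ n^3 + 2*n := by
  haveI : NeZero n := ⟨by omega⟩
  rw [wiener_eq (by omega : 2 ≤ n)]
  have h := Ssum n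
  set S := ∑ k ∈ Finset.range n, min k (n-k) with hS
  have h2 : n % 2 ≤ 1 := by omega
  have h3 : 4*(n*S) + n*(n%2) = n^3 := by
    calc 4*(n*S) + n*(n%2) = n * (4*S + n%2) := by ring
    _ = n * n^2 := by rw [h]
    _ = n^3 := by ring
  have h4 : n * (n % 2) ≤ n * 1 := Nat.mul_le_mul_left n h2
  constructor <;> nlinarith [h3, h4, Nat.zero_le (n * (n % 2))]


open Filter

/-- Let `r : ℕ → ℕ` be any function with `r n ≤ n` for all `n`. Then the
ratio of the Kirchhoff index `(n³ + 4n² + (2·r(n) − 1)·n)/12` of any graph obtained from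
`G_n = P₂ ⊠ C_n` by deleting `r n` vertical edges to its Wiener index `W(G_n) + r n`
converges to `1/6` as `n → ∞`. -/
theorem kirchhoff_div_wiener_del_tendsto (r : ℕ → ℕ) (hr : ∀ n, r n ≤ n) :
    Filter.Tendsto
      (fun n : ℕ =>
        (((n : ℝ) ^ 3 + 4 * n ^ 2 + (2 * (r n : ℝ) - 1) * n) / 12) /
          ((wienerIndex (Gn n) : ℝ) + (r n : ℝ)))
      Filter.atTop (nhds (1 / 6)) := by
  have hx : Tendsto (fun n : ℕ => 1/(n:ℝ)) atTop (nhds 0) :=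
    tendsto_one_div_atTop_nhds_zero_nat
  have hglo : Tendsto (fun n : ℕ =>
      ((1:ℝ) + 4*(1/(n:ℝ)) - (1/(n:ℝ))^2) / (6*(1 + 4*(1/(n:ℝ))^2)))
      atTop (nhds (1/6)) := by
    have hc : ContinuousAt (fun x : ℝ => (1 + 4*x - x^2)/(6*(1+4*x^2))) 0 := by
      apply ContinuousAt.div
      · fun_prop
      · fun_prop
      · norm_num
    have := hc.tendsto.comp hx
    norm_num at this
    convert this using 2 <;> norm_num
  have hghi : Tendsto (fun n : ℕ =>
      ((1:ℝ) + 6*(1/(n:ℝ))) / (6*(1 + (1/(n:ℝ))^2)))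
      atTop (nhds (1/6)) := by
    have hc : ContinuousAt (fun x : ℝ => (1 + 6*x)/(6*(1+x^2))) 0 := by
      apply ContinuousAt.div
      · fun_prop
      · fun_prop
      · norm_num
    have := hc.tendsto.comp hx
    norm_num at this
    convert this using 2 <;> norm_num
  have hlo : Tendsto (fun n : ℕ => (((n:ℝ)^3 + 4*n^2 - n)/12) / (((n:ℝ)^3 + 4*n)/2))
      atTop (nhds (1/6)) := by
    refine Filter.Tendsto.congr' ?_ hglo
    filter_upwards [Filter.eventually_ge_atTop 1] with n hn
    have hn' : (1:ℝ) ≤ (n:ℝ) := by exact_mod_cast hn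
    have h0 : (n:ℝ) ≠ 0 := by positivity
    have h1 : (n:ℝ)^3 + 4*n > 0 := by positivity
    field_simp
    ring
  have hhi : Tendsto (fun n : ℕ => (((n:ℝ)^3 + 6*n^2)/12) / (((n:ℝ)^3 + n)/2))
      atTop (nhds (1/6)) := by
    refine Filter.Tendsto.congr' ?_ hghi
    filter_upwards [Filter.eventually_ge_atTop 1] with n hn
    have hn' : (1:ℝ) ≤ (n:ℝ) := by exact_mod_cast hn
    have h0 : (n:ℝ) ≠ 0 := by positivity
    have h1 : (n:ℝ)^3 + n > 0 := by positivity
    field_simp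
    ring
  apply tendsto_of_tendsto_of_tendsto_of_le_of_le' hlo hhi
  · filter_upwards [Filter.eventually_ge_atTop 3] with n hn3
    obtain ⟨hW1, hW2⟩ := wiener_bounds n hn3
    have hWr1 : ((n:ℝ)^3 + n)/2 ≤ (wienerIndex (Gn n) : ℝ) := by
      have := (Nat.cast_le (α := ℝ)).mpr hW1
      push_cast at this; linarith
    have hWr2 : (wienerIndex (Gn n) : ℝ) ≤ ((n:ℝ)^3 + 2*n)/2 := by
      have := (Nat.cast_le (α := ℝ)).mpr hW2
      push_cast at this; linarith
    have hrr : (r n : ℝ) ≤ (n : ℝ) := by exact_mod_cast hr n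
    have hr0 : (0:ℝ) ≤ (r n : ℝ) := Nat.cast_nonneg _
    have hn3' : (3:ℝ) ≤ (n:ℝ) := by exact_mod_cast hn3
    have hcube : (0:ℝ) < (n:ℝ)^3 := by positivity
    apply div_le_div₀
    · nlinarith
    · nlinarith
    · nlinarith
    · nlinarith
  · filter_upwards [Filter.eventually_ge_atTop 3] with n hn3
    obtain ⟨hW1, hW2⟩ := wiener_bounds n hn3
    have hWr1 : ((n:ℝ)^3 + n)/2 ≤ (wienerIndex (Gn n) : ℝ) := by
      have := (Nat.cast_le (α := ℝ)).mpr hW1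
      push_cast at this; linarith
    have hrr : (r n : ℝ) ≤ (n : ℝ) := by exact_mod_cast hr n
    have hr0 : (0:ℝ) ≤ (r n : ℝ) := Nat.cast_nonneg _
    have hn3' : (3:ℝ) ≤ (n:ℝ) := by exact_mod_cast hn3
    have hcube : (0:ℝ) < (n:ℝ)^3 := by positivity
    apply div_le_div₀
    · positivity
    · nlinarith
    · nlinarith
    · nlinarith
end
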